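/- For every prime p and integer t ≥ 1, with r = p^t + 1 and n = r(r-1)+1, there exists an n×n fooling-set matrix over F_p of rank at most r; consequently n/(rank)² ≥ 1 - 1/r, so the bound n ≤ (rank)² is asymptotically tight over F_p. -/

import Mathlib

open Finset

-- arithmetic identities
lemma key_id2 {q : ℕ} (hq : 1 ≤ q) : (q - 1) * (q^2 + q + 1) = q^3 - 1 := by
  obtain ⟨q', rfl⟩ : ∃ q', q = q' + 1 := ⟨q - 1, by omega⟩
  have h1 : (q' + 1)^3 = q'^3 + 3*q'^2 + 3*q' + 1 := by ring
  have h2 : (q' + 1)^2 = q'^2 + 2*q' + 1 := by ring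
  have h3 : (q'+1-1) * ((q'+1)^2 + (q'+1) + 1) = q'*(q'+1)^2 + q'*(q'+1) + q' := by
    simp; ring
  have h4 : q'*(q'+1)^2 = q'^3 + 2*q'^2 + q' := by ring
  have h5 : q'*(q'+1) = q'^2 + q' := by ring
  omega

lemma key_id3 {q : ℕ} (hq : 1 ≤ q) : (q-1) + (q-1)*q + (q-1)*q^2 = q^3 - 1 := by
  obtain ⟨q', rfl⟩ : ∃ q', q = q' + 1 := ⟨q - 1, by omega⟩
  have h1 : (q' + 1)^3 = q'^3 + 3*q'^2 + 3*q' + 1 := by ring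
  have h4 : q'*(q'+1)^2 = q'^3 + 2*q'^2 + q' := by ring
  have h5 : q'*(q'+1) = q'^2 + q' := by ring
  simp only [Nat.add_sub_cancel]
  omega

lemma digit_step {q a S T : ℕ} (hq : 2 ≤ q) (ha : a ≤ 2*(q-1)) (hT : 1 ≤ T)
    (h : a + S*q = T*q - 1) : a = q - 1 ∧ S + 1 = T := by
  have hq0 : 0 < q := by omega
  have hST : S < T := by
    have : S * q < T * q := by
      have h1 : 1 ≤ T*q := by
        calc 1 ≤ 1*q := by omega
        _ ≤ T*q := Nat.mul_le_mul_right q hT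
      omega
    exact Nat.lt_of_mul_lt_mul_right this
  have h2 : a + 1 = (T - S) * q := by
    have h3 : (T - S) * q = T*q - S*q := Nat.sub_mul T S q
    have h4 : S*q ≤ T*q := Nat.mul_le_mul_right q (le_of_lt hST)
    have h5 : 1 ≤ T*q := by
      calc 1 ≤ 1*q := by omega
      _ ≤ T*q := Nat.mul_le_mul_right q hT
    omega
  have h6 : T - S = 1 := by
    have hge : 1 ≤ T - S := by omega
    by_contra hne
    have : 2 ≤ T - S := by omega
    have : 2 * q ≤ (T - S) * q := Nat.mul_le_mul_right q this
    omega
  constructor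
  · rw [h6, one_mul] at h2; omega
  · omega

lemma digit3 {q a b c : ℕ} (hq : 2 ≤ q) (ha : a ≤ 2*(q-1)) (hb : b ≤ 2*(q-1))
    (hc : c ≤ 2*(q-1)) (h : a + b*q + c*q^2 = q^3 - 1) :
    a = q - 1 ∧ b = q - 1 ∧ c = q - 1 := by
  have h1 : a + (b + c*q)*q = q^2*q - 1 := by
    have e1 : (b + c*q)*q = b*q + c*(q*q) := by ring
    have e2 : q^3 = q^2*q := by ring
    have e3 : c*q^2 = c*(q*q) := by ring
    omega
  have hT : 1 ≤ q^2 := Nat.one_le_pow _ _ (by omega)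
  obtain ⟨ha', hS⟩ := digit_step hq ha hT h1
  have h2 : b + c*q = q*q - 1 := by
    have e2 : q^2 = q*q := by ring
    omega
  have h3 : b + c*q = q*q - 1 := h2
  obtain ⟨hb', hc'⟩ := digit_step hq hb (by omega : 1 ≤ q) h3
  exact ⟨ha', hb', by omega⟩
open Finset

lemma sum_pow_field {F : Type*} [Field F] [Fintype F] {c : ℕ} (hc : Fintype.card F = c + 1)
    {E : ℕ} (hE : 0 < E) : ∑ x : F, x ^ E = if c ∣ E then (-1 : F) else 0 := by
  classical
  let φ : Fˣ ↪ F := ⟨fun x ↦ x, Units.val_injective⟩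
  have hmap : (Finset.univ.map φ) = Finset.univ \ {0} := by
    ext x
    simp only [Finset.mem_map, Finset.mem_univ, Function.Embedding.coeFn_mk, true_and,
      Finset.mem_sdiff, Finset.mem_singleton, φ]; exact isUnit_iff_ne_zero
  have h1 : ∑ x ∈ Finset.univ \ {0}, x ^ E = ∑ x : F, x ^ E := by
    rw [Finset.sum_sdiff_eq_sub (Finset.subset_univ {0}), Finset.sum_singleton,
      zero_pow hE.ne', sub_zero]
  have h0 : ∑ x : F, x ^ E = ∑ x : Fˣ, ((x : F)) ^ E := by
    rw [← h1, ← hmap, Finset.sum_map Finset.univ φ (fun x => x ^ E)]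
    rfl
  rw [h0, FiniteField.sum_pow_units F E, hc]
  simp

noncomputable def SF (q e : ℕ) (F : Type*) [Field F] [Fintype F] : F :=
  ∑ x : F, x ^ e * (1 - (x + x^q + x^(q^2))^(q-1))

lemma SF_eq {q : ℕ} {F : Type*} [Field F] [Fintype F] (hq : 2 ≤ q)
    (hcard : Fintype.card F = q^3) {e : ℕ} (he : 0 < e) :
    SF q e F = (if (q^3-1) ∣ e then (-1:F) else 0)
      - ∑ k ∈ range q, ∑ j ∈ range (k+1),
          ((((q-1).choose k * k.choose j : ℕ)) : F) *
            (if (q^3-1) ∣ (e + (j + (k-j)*q + (q-1-k)*q^2)) then (-1:F) else 0) := by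
  classical
  have hc1 : Fintype.card F = (q^3 - 1) + 1 := by
    have : 1 ≤ q^3 := Nat.one_le_pow _ _ (by omega); omega
  have hTpow : ∀ x : F, (x + x^q + x^(q^2))^(q-1)
      = ∑ k ∈ range q, ∑ j ∈ range (k+1),
          x ^ (j + (k-j)*q + (q-1-k)*q^2) * (((q-1).choose k * k.choose j : ℕ) : F) := by
    intro x
    rw [add_pow (x + x^q) (x^(q^2)) (q-1), show q - 1 + 1 = q from by omega]
    refine Finset.sum_congr rfl fun k hk => ?_
    rw [add_pow x (x^q) k, Finset.sum_mul, Finset.sum_mul]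
    refine Finset.sum_congr rfl fun j hj => ?_
    rw [pow_add, pow_add, pow_mul' x (k-j) q, pow_mul' x (q-1-k) (q^2)]
    push_cast
    ring
  have hsplit : SF q e F = (∑ x : F, x^e) - ∑ x : F, x^e * (x + x^q + x^(q^2))^(q-1) := by
    unfold SF
    rw [← Finset.sum_sub_distrib]
    exact Finset.sum_congr rfl fun x _ => by ring
  have h2 : ∑ x : F, x^e * (x+x^q+x^(q^2))^(q-1)
      = ∑ k ∈ range q, ∑ j ∈ range (k+1), (((q-1).choose k * k.choose j : ℕ) : F) *
          ∑ x : F, x ^ (e + (j + (k-j)*q + (q-1-k)*q^2)) := by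
    simp_rw [hTpow, Finset.mul_sum]
    rw [Finset.sum_comm]
    refine Finset.sum_congr rfl fun k _ => ?_
    rw [Finset.sum_comm]
    refine Finset.sum_congr rfl fun j _ => ?_
    refine Finset.sum_congr rfl fun x _ => ?_
    rw [pow_add]; ring
  rw [hsplit, h2, sum_pow_field hc1 he]
  congr 1
  refine Finset.sum_congr rfl fun k _ => Finset.sum_congr rfl fun j _ => ?_
  rw [sum_pow_field hc1 (Nat.add_pos_left he _)]

lemma SF_witness {q : ℕ} {F : Type*} [Field F] [Fintype F] (hq : 2 ≤ q)
    (hcard : Fintype.card F = q^3) {e : ℕ} (he : 0 < e) (he2 : e < q^3 - 1)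
    (hS : SF q e F ≠ 0) :
    ∃ a b c : ℕ, a ≤ q-1 ∧ b ≤ q-1 ∧ c ≤ q-1 ∧ a+b+c = q-1 ∧
      e + (a + b*q + c*q^2) = q^3-1 := by
  by_contra hcon
  push_neg at hcon
  apply hS
  rw [SF_eq hq hcard he]
  have hnd : ¬ (q^3-1) ∣ e := by
    intro hd
    exact absurd (Nat.le_of_dvd he hd) (by omega)
  rw [if_neg hnd]
  have hz : ∀ k ∈ range q, ∀ j ∈ range (k+1),
      ((((q-1).choose k * k.choose j : ℕ)) : F) *
        (if (q^3-1) ∣ (e + (j + (k-j)*q + (q-1-k)*q^2)) then (-1:F) else 0) = 0 := by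
    intro k hk j hj
    rw [Finset.mem_range] at hk hj
    have hDle : (j + (k-j)*q + (q-1-k)*q^2) ≤ q^3 - 1 := by
      have h3 := key_id3 (show 1 ≤ q by omega)
      have l1 : j ≤ q - 1 := by omega
      have l2 : (k-j)*q ≤ (q-1)*q := Nat.mul_le_mul_right q (by omega)
      have l3 : (q-1-k)*q^2 ≤ (q-1)*q^2 := Nat.mul_le_mul_right (q^2) (by omega)
      omega
    have hif : ¬ (q^3-1) ∣ (e + (j + (k-j)*q + (q-1-k)*q^2)) := by
      intro hd
      obtain ⟨m, hm⟩ := hd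
      have hq3 : 1 ≤ q^3 - 1 := by
        have : 2^3 ≤ q^3 := Nat.pow_le_pow_left hq 3
        omega
      have hm1 : m = 1 := by
        rcases Nat.lt_or_ge m 2 with h | h
        · rcases Nat.eq_zero_or_pos m with h0 | h1
          · subst h0; omega
          · omega
        · exfalso
          have : (q^3-1) * 2 ≤ (q^3-1) * m := Nat.mul_le_mul_left _ h
          omega
      subst hm1
      rw [Nat.mul_one] at hm
      exact hcon j (k-j) (q-1-k) (by omega) (by omega) (by omega) (by omega) hm
    rw [if_neg hif, mul_zero]
  rw [Finset.sum_congr rfl (fun k hk => Finset.sum_congr rfl (fun j hj => hz k hk j hj))]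
  simp

lemma SF_top {q : ℕ} {F : Type*} [Field F] [Fintype F] (hq : 2 ≤ q)
    (hcard : Fintype.card F = q^3) : SF q (q^3-1) F = -1 := by
  have hq3 : 8 ≤ q^3 := by
    calc (8:ℕ) = 2^3 := rfl
    _ ≤ q^3 := Nat.pow_le_pow_left hq 3
  rw [SF_eq hq hcard (by omega)]
  rw [if_pos dvd_rfl]
  have hz : ∀ k ∈ range q, ∀ j ∈ range (k+1),
      ((((q-1).choose k * k.choose j : ℕ)) : F) *
        (if (q^3-1) ∣ ((q^3-1) + (j + (k-j)*q + (q-1-k)*q^2)) then (-1:F) else 0) = 0 := by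
    intro k hk j hj
    rw [Finset.mem_range] at hk hj
    have h3 := key_id3 (show 1 ≤ q by omega)
    have hDle : (j + (k-j)*q + (q-1-k)*q^2) ≤ q^3 - 1 := by
      have l2 : (k-j)*q ≤ (q-1)*q := Nat.mul_le_mul_right q (by omega)
      have l3 : (q-1-k)*q^2 ≤ (q-1)*q^2 := Nat.mul_le_mul_right (q^2) (by omega)
      omega
    have hif : ¬ (q^3-1) ∣ ((q^3-1) + (j + (k-j)*q + (q-1-k)*q^2)) := by
      intro hd
      have hd2 : (q^3-1) ∣ (j + (k-j)*q + (q-1-k)*q^2) :=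
        (Nat.dvd_add_right dvd_rfl).mp hd
      have hq2 : 1 ≤ q^2 := Nat.one_le_pow _ _ (by omega)
      have hDpos : 0 < (j + (k-j)*q + (q-1-k)*q^2) := by
        rcases Nat.eq_zero_or_pos (j + (k-j)*q + (q-1-k)*q^2) with h0 | h1
        · exfalso
          have hj0 : j = 0 := by omega
          have hkj : (k-j)*q = 0 := by omega
          have hqk : (q-1-k)*q^2 = 0 := by omega
          have hkj' : k - j = 0 := by
            rcases Nat.mul_eq_zero.mp hkj with h | h
            · exact h
            · omega
          have hqk' : q-1-k = 0 := by
            rcases Nat.mul_eq_zero.mp hqk with h | h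
            · exact h
            · exfalso; exact absurd h (by omega)
          omega
        · exact h1
      have hDeq : (j + (k-j)*q + (q-1-k)*q^2) = q^3 - 1 :=
        Nat.le_antisymm hDle (Nat.le_of_dvd hDpos hd2)
      obtain ⟨e1, e2, e3⟩ := digit3 hq (by omega) (by omega) (by omega) hDeq
      omega
    rw [if_neg hif, mul_zero]
  rw [Finset.sum_congr rfl (fun k hk => Finset.sum_congr rfl (fun j hj => hz k hk j hj))]
  simp

lemma SF_pow_p {p t q : ℕ} [hp : Fact p.Prime] (ht : 0 < t) (hqp : q = p^t)
    {F : Type*} [Field F] [Fintype F] [CharP F p] (e : ℕ) : (SF q e F)^p = SF q e F := by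
  classical
  have hfrobx : Function.Injective (fun x : F => x ^ p) := by
    intro a b hab
    simp only at hab
    have h1 : (a - b)^p = 0 := by
      rw [sub_pow_char, hab, sub_self]
    have h2 : a - b = 0 :=
      (pow_eq_zero_iff (show p ≠ 0 by have := hp.out.two_le; omega)).mp h1
    exact sub_eq_zero.mp h2
  have hbij : Function.Bijective (fun x : F => x ^ p) :=
    Finite.injective_iff_bijective.mp hfrobx
  have hT : ∀ x : F, ((x + x^q + x^(q^2))^(q-1))^p
      = ((x^p) + (x^p)^q + (x^p)^(q^2))^(q-1) := by
    intro x
    rw [pow_right_comm]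
    congr 1
    subst hqp
    rw [show ((p^t)^2 : ℕ) = p^(2*t) from by rw [← pow_mul, mul_comm]]
    rw [add_pow_char, add_pow_char]
    rw [pow_right_comm x (p^t) p, pow_right_comm x (p^(2*t)) p]
  calc (SF q e F)^p = ∑ x : F, ((x^p))^e * (1 - ((x^p) + (x^p)^q + (x^p)^(q^2))^(q-1)) := by
        unfold SF
        rw [sum_pow_char]
        refine Finset.sum_congr rfl fun x _ => ?_
        rw [mul_pow, sub_pow_char, one_pow, hT, pow_right_comm]
    _ = SF q e F := by
        unfold SF
        exact Fintype.sum_bijective _ hbij _ _ (fun x => rfl)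

lemma mem_prime_field {p : ℕ} [hp : Fact p.Prime] {F : Type*} [Field F] [Fintype F] [CharP F p]
    {α : F} (hα : α^p = α) : ∃ b : ZMod p, ZMod.castHom (dvd_refl p) F b = α := by
  classical
  set φ := ZMod.castHom (dvd_refl p) F with hφ
  set P : Polynomial F := Polynomial.X^p - Polynomial.X with hP
  have hp2 : 2 ≤ p := hp.out.two_le
  have hdeg : P.natDegree = p := by
    rw [hP]
    rw [Polynomial.natDegree_sub_eq_left_of_natDegree_lt]
    · exact Polynomial.natDegree_X_pow p
    · rw [Polynomial.natDegree_X_pow, Polynomial.natDegree_X]; omega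
  have hP0 : P ≠ 0 := by
    intro h
    rw [h, Polynomial.natDegree_zero] at hdeg; omega
  have hRoot : ∀ β : F, β^p = β → β ∈ P.roots.toFinset := by
    intro β hβ
    rw [Multiset.mem_toFinset, Polynomial.mem_roots hP0]
    simp [hP, Polynomial.IsRoot, hβ]
  set R : Finset F := Finset.image φ Finset.univ with hR
  have hRsub : R ⊆ P.roots.toFinset := by
    intro x hx
    rw [hR, Finset.mem_image] at hx
    obtain ⟨b, _, rfl⟩ := hx
    apply hRoot
    rw [← map_pow, ZMod.pow_card]
  have hRcard : R.card = p := by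
    rw [hR, Finset.card_image_of_injective _ (ZMod.castHom_injective F), Finset.card_univ,
      ZMod.card]
  have hcardle : P.roots.toFinset.card ≤ p := by
    calc P.roots.toFinset.card ≤ Multiset.card P.roots := Multiset.toFinset_card_le _
    _ ≤ P.natDegree := Polynomial.card_roots' P
    _ = p := hdeg
  have hEq : R = P.roots.toFinset :=
    Finset.eq_of_subset_of_card_le hRsub (by omega)
  have hmem : α ∈ R := by
    rw [hEq]; exact hRoot α hα
  rw [hR, Finset.mem_image] at hmem
  obtain ⟨b, _, hb⟩ := hmem
  exact ⟨b, hb⟩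

lemma TF_pow_q {p t q : ℕ} [Fact p.Prime] (hqp : q = p^t) {F : Type*} [Field F] [Fintype F]
    [CharP F p] (hcard : Fintype.card F = q^3) (x : F) :
    (x + x^q + x^(q^2))^q = x + x^q + x^(q^2) := by
  have hx3 : x^(q^3) = x := by rw [← hcard]; exact FiniteField.pow_card x
  calc (x + x^q + x^(q^2))^q = x^q + (x^q)^q + (x^(q^2))^q := by
        subst hqp; rw [add_pow_char_pow, add_pow_char_pow]
  _ = x + x^q + x^(q^2) := by
        rw [← pow_mul, ← pow_mul, show q*q = q^2 from by ring, show q^2*q = q^3 from by ring,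
          hx3]
        ring

lemma root_lemma {q : ℕ} (hq : 2 ≤ q) {F : Type*} [Field F] {x : F} (hx : x ≠ 0)
    (hTx : x + x^q + x^(q^2) = 0) : (x^(q-1))^(q+1) + x^(q-1) + 1 = 0 := by
  have hn1 : (q-1)*(q+1)+1 = q^2 := by
    obtain ⟨q', rfl⟩ : ∃ q', q = q' + 1 := ⟨q - 1, by omega⟩
    have e1 : q' * (q'+1+1) = q'^2 + 2*q' := by ring
    have e2 : (q'+1)^2 = q'^2 + 2*q' + 1 := by ring
    simp only [Nat.add_sub_cancel]
    omega
  have hn2 : (q-1)+1 = q := by omega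
  have hkey : x * ((x^(q-1))^(q+1) + x^(q-1) + 1) = x + x^q + x^(q^2) := by
    rw [← pow_mul, mul_add, mul_add, mul_one]
    rw [mul_comm x _, mul_comm x _, ← pow_succ, ← pow_succ, hn1, hn2]
    ring
  have h0 : x * ((x^(q-1))^(q+1) + x^(q-1) + 1) = 0 := by rw [hkey, hTx]
  rcases mul_eq_zero.mp h0 with h | h
  · exact absurd h hx
  · exact h

lemma SF_period {q n : ℕ} (hq : 2 ≤ q) (hn : n = q^2+q+1) {F : Type*} [Field F] [Fintype F]
    (hcard : Fintype.card F = q^3) {a b : ℕ} (ha : 0 < a) (hb : 0 < b)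
    (hab : a % n = b % n) : SF q ((q-1)*a) F = SF q ((q-1)*b) F := by
  unfold SF
  refine Finset.sum_congr rfl fun x _ => ?_
  congr 1
  by_cases hx : x = 0
  · subst hx
    rw [zero_pow (Nat.mul_ne_zero (by omega) (by omega)),
        zero_pow (Nat.mul_ne_zero (by omega) (by omega))]
  · have hyn : (x^(q-1))^n = 1 := by
      rw [← pow_mul, hn, key_id2 (show 1 ≤ q by omega), ← hcard]
      exact FiniteField.pow_card_sub_one_eq_one x hx
    have key : ∀ m : ℕ, x ^ ((q-1)*m) = (x^(q-1))^(m % n) := by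
      intro m
      conv_lhs => rw [pow_mul, show m = n*(m/n) + m%n from (Nat.div_add_mod m n).symm]
      rw [pow_add, pow_mul, hyn, one_pow, one_mul]
    rw [key a, key b, hab]

lemma SF_triple {p t q : ℕ} [Fact p.Prime] (hqp : q = p^t) (hq : 2 ≤ q)
    {F : Type*} [Field F] [Fintype F] [CharP F p] (hcard : Fintype.card F = q^3)
    {A : ℕ} (hA : 0 < A) :
    SF q ((q-1)*(A+q+1)) F + SF q ((q-1)*(A+1)) F + SF q ((q-1)*A) F = 0 := by
  unfold SF
  rw [← Finset.sum_add_distrib, ← Finset.sum_add_distrib]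
  rw [Finset.sum_eq_zero]
  intro x _
  have hxe : ∀ m : ℕ, x ^ ((q-1)*m) = (x^(q-1))^m := fun m => pow_mul x (q-1) m
  rw [hxe, hxe, hxe]
  have hcollect : (x^(q-1))^(A+q+1) * (1 - (x + x^q + x^(q^2))^(q-1))
      + (x^(q-1))^(A+1) * (1 - (x + x^q + x^(q^2))^(q-1))
      + (x^(q-1))^A * (1 - (x + x^q + x^(q^2))^(q-1))
      = (x^(q-1))^A * ((x^(q-1))^(q+1) + x^(q-1) + 1) * (1 - (x + x^q + x^(q^2))^(q-1)) := by
    ring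
  rw [hcollect]
  by_cases hx : x = 0
  · subst hx
    rw [zero_pow (show q - 1 ≠ 0 by omega), zero_pow hA.ne', zero_mul, zero_mul]
  · by_cases hTx : x + x^q + x^(q^2) = 0
    · rw [root_lemma hq hx hTx, mul_zero, zero_mul]
    · have hTq := TF_pow_q hqp hcard x
      have hu1 : (x + x^q + x^(q^2))^(q-1) = 1 := by
        have h1 : (x + x^q + x^(q^2))^(q-1) * (x + x^q + x^(q^2))
            = 1 * (x + x^q + x^(q^2)) := by
          rw [← pow_succ, show q-1+1 = q by omega, hTq, one_mul]
        exact mul_right_cancel₀ hTx h1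
      rw [hu1, sub_self, mul_zero]

theorem asymptotically_tight (p : ℕ) [Fact p.Prime] (t : ℕ) (ht : 1 ≤ t)
    (r n : ℕ) (hr : r = p ^ t + 1) (hn : n = r * (r - 1) + 1) :
    ∃ M : Matrix (Fin n) (Fin n) (ZMod p),
      (∀ i, M i i ≠ 0) ∧ (∀ i j, i ≠ j → M i j * M j i = 0) ∧
      M.rank ≤ r ∧ (1 : ℚ) - 1 / (r : ℚ) ≤ (n : ℚ) / ((M.rank : ℚ)) ^ 2 := by
  classical
  set q := p^t with hq'
  have hp2 : 2 ≤ p := (Fact.out : p.Prime).two_le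
  have hq : 2 ≤ q := by
    calc 2 = 2^1 := rfl
    _ ≤ p^1 := Nat.pow_le_pow_left hp2 1
    _ ≤ p^t := Nat.pow_le_pow_right (by omega) ht
  have hnq : n = q^2 + q + 1 := by
    rw [hn, hr]; simp only [Nat.add_sub_cancel]; ring
  have hrq : r = q + 1 := hr
  set F := GaloisField p (3*t) with hF
  letI : Fintype F := Fintype.ofFinite F
  have hcard : Fintype.card F = q^3 := by
    have h1 := GaloisField.card (p := p) (n := 3*t) (by omega)
    rw [Nat.card_eq_fintype_card] at h1
    rw [h1, hq', mul_comm, pow_mul]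
  set φ : ZMod p →+* F := ZMod.castHom (dvd_refl p) F with hφ
  have hφinj : Function.Injective φ := ZMod.castHom_injective F
  have hmem : ∀ d : ℕ, ∃ b : ZMod p, φ b = SF q ((q-1)*d) F := fun d =>
    mem_prime_field (SF_pow_p (by omega : 0 < t) hq' ((q-1)*d))
  choose g hg using hmem
  set M : Matrix (Fin n) (Fin n) (ZMod p) := fun i j => g ((i:ℕ) + (n - (j:ℕ))) with hM
  have hnpos : 0 < n := by rw [hnq]; positivity
  have hqn : (q-1) * n = q^3 - 1 := by rw [hnq]; exact key_id2 (by omega)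
  have hq38 : 8 ≤ q^3 := by
    calc (8:ℕ) = 2^3 := rfl
    _ ≤ q^3 := Nat.pow_le_pow_left hq 3
  -- diagonal
  have hdiag : ∀ i : Fin n, φ (M i i) = -1 := by
    intro i
    have hi := i.isLt
    rw [hM]; dsimp only
    rw [hg]
    rw [show (i:ℕ) + (n - (i:ℕ)) = n from by omega, hqn]
    exact SF_top hq hcard
  have hMdiag : ∀ i : Fin n, M i i ≠ 0 := by
    intro i h
    have h2 := hdiag i
    rw [h, map_zero] at h2
    exact one_ne_zero (neg_eq_zero.mp h2.symm)
  -- fooling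
  have hfool : ∀ i j : Fin n, i ≠ j → M i j * M j i = 0 := by
    intro i j hij
    apply hφinj
    rw [map_mul, map_zero, hM]; dsimp only
    rw [hg, hg]
    have hij' : (i:ℕ) ≠ (j:ℕ) := fun h => hij (Fin.ext h)
    have hi := i.isLt; have hj := j.isLt
    set a := (i:ℕ) + (n - (j:ℕ)) with hA
    set b := (j:ℕ) + (n - (i:ℕ)) with hB
    have hab : a + b = 2*n := by omega
    have ha1 : 1 ≤ a ∧ a ≤ 2*n - 1 ∧ a ≠ n := by omega
    set d := a % n with hd
    have hdlt : d < n := Nat.mod_lt _ hnpos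
    have hd0 : d ≠ 0 := by
      intro h0
      obtain ⟨m, hm⟩ := Nat.dvd_of_mod_eq_zero (hd ▸ h0)
      have hm1 : m = 1 := by
        rcases m with _ | _ | m2
        · rw [Nat.mul_zero] at hm; omega
        · rfl
        · exfalso
          have h5 : n * 2 ≤ n * (m2 + 1 + 1) := Nat.mul_le_mul_left _ (by omega)
          omega
      rw [hm1, Nat.mul_one] at hm
      omega
    have hbn : b % n = n - d := by
      have h2 : (a + b) % n = 0 := by rw [hab, Nat.mul_comm]; simp [Nat.mul_mod_right]
      have h3 : (d + b % n) % n = 0 := by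
        rw [hd, ← Nat.add_mod]; exact h2
      have hblt : b % n < n := Nat.mod_lt _ hnpos
      obtain ⟨m, hm⟩ := Nat.dvd_of_mod_eq_zero h3
      have hbpos : 0 < d + b % n := by omega
      have hm1 : m = 1 := by
        rcases m with _ | _ | m2
        · rw [Nat.mul_zero] at hm; omega
        · rfl
        · exfalso
          have h5 : n * 2 ≤ n * (m2 + 1 + 1) := Nat.mul_le_mul_left _ (by omega)
          omega
      rw [hm1, Nat.mul_one] at hm
      omega
    have hfa : SF q ((q-1)*a) F = SF q ((q-1)*d) F :=
      SF_period hq hnq hcard (by omega) (by omega) (Nat.mod_eq_of_lt hdlt).symm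
    have hfb : SF q ((q-1)*b) F = SF q ((q-1)*(n-d)) F :=
      SF_period hq hnq hcard (by omega) (by omega)
        (by rw [hbn, Nat.mod_eq_of_lt (by omega : n - d < n)])
    rw [hfa, hfb]
    by_contra hne
    obtain ⟨hne1, hne2⟩ := mul_ne_zero_iff.mp hne
    have hlt1 : (q-1)*d < q^3-1 := by
      have := Nat.mul_lt_mul_of_lt_of_le hdlt (le_refl (q-1)) (by omega : 0 < q - 1)
      rw [Nat.mul_comm d (q-1), Nat.mul_comm n (q-1)] at this
      omega
    have hlt2 : (q-1)*(n-d) < q^3-1 := by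
      have := Nat.mul_lt_mul_of_lt_of_le (show n - d < n by omega) (le_refl (q-1))
        (by omega : 0 < q - 1)
      rw [Nat.mul_comm (n-d) (q-1), Nat.mul_comm n (q-1)] at this
      omega
    obtain ⟨a1,b1,c1,l1,l2,l3,hsum1,heq1⟩ := SF_witness hq hcard
      (Nat.mul_pos (by omega) (by omega)) hlt1 hne1
    obtain ⟨a2,b2,c2,m1,m2,m3,hsum2,heq2⟩ := SF_witness hq hcard
      (Nat.mul_pos (by omega) (by omega)) hlt2 hne2
    have e2 : (q-1)*d + (q-1)*(n-d) = q^3-1 := by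
      have e3 : (q-1)*d + (q-1)*(n-d) = (q-1)*(d + (n-d)) := by rw [Nat.mul_add]
      rw [e3, show d + (n - d) = n from by omega, hqn]
    have hcomb : (a1+a2) + (b1+b2)*q + (c1+c2)*q^2 = q^3 - 1 := by
      have e1 : (a1+a2) + (b1+b2)*q + (c1+c2)*q^2
          = (a1 + b1*q + c1*q^2) + (a2 + b2*q + c2*q^2) := by ring
      rw [e1]; omega
    obtain ⟨d1, d2, d3⟩ := digit3 hq (by omega) (by omega) (by omega) hcomb
    omega
  -- kernel vectors
  set vker : Fin (q^2) → (Fin n → ZMod p) := fun s =>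
    (Pi.single (⟨(s:ℕ), by have := s.isLt; omega⟩ : Fin n) (1:ZMod p))
    + Pi.single (⟨(s:ℕ)+q, by have := s.isLt; omega⟩ : Fin n) 1
    + Pi.single (⟨(s:ℕ)+q+1, by have := s.isLt; omega⟩ : Fin n) 1 with hvker
  have hker : ∀ s, M.mulVec (vker s) = 0 := by
    intro s
    have hs := s.isLt
    rw [hvker]; dsimp only
    rw [Matrix.mulVec_add, Matrix.mulVec_add, Matrix.mulVec_single_one, Matrix.mulVec_single_one,
      Matrix.mulVec_single_one]
    funext i
    have hi := i.isLt
    simp only [Pi.add_apply, mul_one, Pi.zero_apply]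
    apply hφinj
    rw [map_add, map_add, map_zero, Matrix.col_apply, Matrix.col_apply, Matrix.col_apply, hM]; dsimp only
    rw [hg, hg, hg]
    set A := (i:ℕ) + (n - ((s:ℕ)+q+1)) with hAdef
    have hA1 : (i:ℕ) + (n - (s:ℕ)) = A + q + 1 := by omega
    have hA2 : (i:ℕ) + (n - ((s:ℕ)+q)) = A + 1 := by omega
    have hApos : 0 < A := by omega
    rw [hA1, hA2]
    exact SF_triple hq' hq hcard hApos
  have hli : LinearIndependent (ZMod p) vker := by
    rw [linearIndependent_iff']
    intro sfin gcoef hsum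
    have main : ∀ m : ℕ, ∀ sidx, sidx ∈ sfin → (sidx : Fin (q^2)).val = m → gcoef sidx = 0 := by
      intro m
      induction m using Nat.strong_induction_on with
      | _ m IH =>
        intro sidx hmem hval
        have hmq2 := sidx.isLt
        have hmn : m < n := by omega
        have heval : ∑ i ∈ sfin, gcoef i * (vker i ⟨m,hmn⟩) = 0 := by
          have h5 := congrFun hsum ⟨m, hmn⟩
          simpa [Finset.sum_apply, Pi.smul_apply, smul_eq_mul] using h5
        have hexpand : ∀ i : Fin (q^2),
            vker i ⟨m,hmn⟩ = (if m = (i:ℕ) then (1:ZMod p) else 0)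
              + (if m = (i:ℕ)+q then 1 else 0) + (if m = (i:ℕ)+q+1 then 1 else 0) := by
          intro i
          rw [hvker]
          simp only [Pi.add_apply, Pi.single_apply, Fin.mk.injEq]
        rw [Finset.sum_congr rfl (fun i _ => by rw [hexpand i])] at heval
        have hsplit : ∑ i ∈ sfin, gcoef i * ((if m = (i:ℕ) then (1:ZMod p) else 0)
              + (if m = (i:ℕ)+q then 1 else 0) + (if m = (i:ℕ)+q+1 then 1 else 0))
            = (∑ i ∈ sfin, if m = (i:ℕ) then gcoef i else 0)
              + (∑ i ∈ sfin, if m = (i:ℕ)+q then gcoef i else 0)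
              + (∑ i ∈ sfin, if m = (i:ℕ)+q+1 then gcoef i else 0) := by
          rw [← Finset.sum_add_distrib, ← Finset.sum_add_distrib]
          refine Finset.sum_congr rfl fun i _ => ?_
          by_cases h1 : m = (i:ℕ) <;> by_cases h2 : m = (i:ℕ)+q <;>
            by_cases h3 : m = (i:ℕ)+q+1 <;> simp [h1, h2, h3, mul_add] <;> omega
        rw [hsplit] at heval
        have hz2 : (∑ i ∈ sfin, if m = (i:ℕ)+q then gcoef i else 0) = 0 := by
          refine Finset.sum_eq_zero fun i hi => ?_
          by_cases h2 : m = (i:ℕ)+q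
          · rw [if_pos h2]; exact IH (i:ℕ) (by omega) i hi rfl
          · rw [if_neg h2]
        have hz3 : (∑ i ∈ sfin, if m = (i:ℕ)+q+1 then gcoef i else 0) = 0 := by
          refine Finset.sum_eq_zero fun i hi => ?_
          by_cases h3 : m = (i:ℕ)+q+1
          · rw [if_pos h3]; exact IH (i:ℕ) (by omega) i hi rfl
          · rw [if_neg h3]
        have hz1 : (∑ i ∈ sfin, if m = (i:ℕ) then gcoef i else 0) = gcoef sidx := by
          have hcongr : ∀ i ∈ sfin, (if m = (i:ℕ) then gcoef i else 0)
              = if i = sidx then gcoef i else 0 := by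
            intro i _
            by_cases h : i = sidx
            · subst h; simp [hval.symm]
            · have hne : ¬ (m = (i:ℕ)) := fun hc => h (Fin.ext (by omega))
              simp [h, hne]
          rw [Finset.sum_congr rfl hcongr, Finset.sum_ite_eq' sfin sidx gcoef, if_pos hmem]
        rw [hz1, hz2, hz3, add_zero, add_zero] at heval
        exact heval
    intro i hi
    exact main (i:ℕ) i hi rfl
  -- rank bounds
  have hmemker : ∀ s, vker s ∈ LinearMap.ker M.mulVecLin := by
    intro s
    rw [LinearMap.mem_ker, Matrix.mulVecLin_apply]
    exact hker s
  have hkerle : (q^2 : ℕ) ≤ Module.finrank (ZMod p) (LinearMap.ker M.mulVecLin) := by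
    let w : Fin (q^2) → LinearMap.ker M.mulVecLin := fun s => ⟨vker s, hmemker s⟩
    have hliw : LinearIndependent (ZMod p) w := by
      apply LinearIndependent.of_comp (LinearMap.ker M.mulVecLin).subtype
      exact hli
    simpa using hliw.fintype_card_le_finrank
  have hrn : Module.finrank (ZMod p) (LinearMap.range M.mulVecLin)
      + Module.finrank (ZMod p) (LinearMap.ker M.mulVecLin) = n := by
    rw [LinearMap.finrank_range_add_finrank_ker]
    simp [Module.finrank_fin_fun]
  have hrankdef : M.rank = Module.finrank (ZMod p) (LinearMap.range M.mulVecLin) := rfl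
  have hrank_le : M.rank ≤ r := by omega
  have hrank_pos : 1 ≤ M.rank := by
    by_contra hcon
    have h0 : Module.finrank (ZMod p) (LinearMap.range M.mulVecLin) = 0 := by omega
    have hbot : LinearMap.range M.mulVecLin = ⊥ := Submodule.finrank_eq_zero.mp h0
    have hzero : M.mulVecLin (Pi.single (⟨0, hnpos⟩ : Fin n) 1) = 0 := by
      have hmem0 : M.mulVecLin (Pi.single (⟨0, hnpos⟩ : Fin n) 1)
          ∈ LinearMap.range M.mulVecLin := LinearMap.mem_range_self _ _
      rw [hbot] at hmem0
      simpa using hmem0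
    have hz := congrFun hzero ⟨0, hnpos⟩
    rw [Matrix.mulVecLin_apply, Matrix.mulVec_single_one] at hz
    simp only [mul_one, Pi.zero_apply] at hz
    exact hMdiag ⟨0, hnpos⟩ hz
  -- rational inequality
  refine ⟨M, hMdiag, hfool, hrank_le, ?_⟩
  have hR1 : (1:ℚ) ≤ (M.rank : ℚ) := by exact_mod_cast hrank_pos
  have hRr : (M.rank : ℚ) ≤ (r:ℚ) := by exact_mod_cast hrank_le
  have hr3 : (3:ℚ) ≤ (r:ℚ) := by exact_mod_cast (show 3 ≤ r by omega)
  have hnr : (n:ℚ) = (r:ℚ)^2 - (r:ℚ) + 1 := by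
    have h6 : ((n:ℕ):ℚ) = ((r*(r-1)+1 : ℕ) : ℚ) := by rw [hn]
    rw [h6]
    push_cast [show (1:ℕ) ≤ r from by omega]
    ring
  have hRpos : (0:ℚ) < (M.rank:ℚ) := by linarith
  have hrpos : (0:ℚ) < (r:ℚ) := by linarith
  have h1 : (n:ℚ) / (r:ℚ)^2 ≤ (n:ℚ) / (M.rank:ℚ)^2 := by
    apply div_le_div_of_nonneg_left (by positivity) (by positivity)
    nlinarith
  have h2 : (1:ℚ) - 1/(r:ℚ) ≤ (n:ℚ)/(r:ℚ)^2 := by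
    rw [hnr]
    have e : (((r:ℚ)^2 - r + 1))/(r:ℚ)^2 = 1 - 1/r + 1/r^2 := by
      field_simp
    rw [e]
    have hpos2 : (0:ℚ) < 1/(r:ℚ)^2 := by positivity
    linarith
  linarith
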